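/- Let m be even and A a symmetric tensor of order m and dimension n such that A x^{m-2} is a positive definite matrix for every nonzero x in R^n. Suppose x* is nonzero and there exists u* ≥ 0 satisfying: q + m A x*^{m-1} - (m-1)(A x*^{m-2}) u* ≥ 0, x*^T(q + m A x*^{m-1} - (m-1)(A x*^{m-2}) u*) = 0, u*^T(q + A x*^{m-1}) = 0, x* ≥ 0, and A x*^{m-1} + q ≥ 0, and additionally (x* - u*)^T (A x*^{m-2})(x* - u*) ≤ 0. Then x* = u*, and x* solves the tensor complementarity problem NCP(q,A): x* ≥ 0, A x*^{m-1} + q ≥ 0, and x*^T(A x*^{m-1} + q) = 0. -/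

import Mathlib

open Finset Matrix

noncomputable def tmul {m n : ℕ} (A : (Fin m → Fin n) → ℝ) (x : Fin n → ℝ) : ℝ :=
  ∑ i : Fin m → Fin n, A i * ∏ k, x (i k)

noncomputable def tvec {m n : ℕ} (A : (Fin (m + 1) → Fin n) → ℝ) (x : Fin n → ℝ) :
    Fin n → ℝ :=
  fun j => ∑ i : Fin m → Fin n, A (Fin.cons j i) * ∏ k, x (i k)

noncomputable def tmat {m n : ℕ} (A : (Fin (m + 2) → Fin n) → ℝ) (x : Fin n → ℝ) :
    Matrix (Fin n) (Fin n) ℝ :=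
  Matrix.of fun j l => ∑ i : Fin m → Fin n, A (Fin.cons j (Fin.cons l i)) * ∏ k, x (i k)

def TSymm {m n : ℕ} (A : (Fin m → Fin n) → ℝ) : Prop :=
  ∀ σ : Equiv.Perm (Fin m), ∀ i : Fin m → Fin n, A (i ∘ σ) = A i

noncomputable def ttrans {m n : ℕ} (D : (Fin m → Fin n) → ℝ) (B : Matrix (Fin n) (Fin n) ℝ) :
    (Fin m → Fin n) → ℝ :=
  fun j => ∑ i : Fin m → Fin n, D i * ∏ k, B (j k) (i k)

def TDiag {m n : ℕ} (D : (Fin m → Fin n) → ℝ) : Prop :=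
  ∀ i : Fin m → Fin n, (∃ k l, i k ≠ i l) → D i = 0

theorem stmt5 {p n : ℕ} (hm : Even (p + 2))
    (A : (Fin (p + 2) → Fin n) → ℝ) (hsym : TSymm A) (q xs us : Fin n → ℝ)
    (hpd : ∀ x : Fin n → ℝ, x ≠ 0 → (tmat A x).PosDef)
    (hxne : xs ≠ 0)
    (hxs : ∀ i, 0 ≤ xs i) (hfeas : ∀ i, 0 ≤ tvec A xs i + q i)
    (hus : ∀ i, 0 ≤ us i)
    (h1 : ∀ i, 0 ≤ q i + ((p : ℝ) + 2) * tvec A xs i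
        - ((p : ℝ) + 1) * (tmat A xs).mulVec us i)
    (h2 : ∑ i, xs i * (q i + ((p : ℝ) + 2) * tvec A xs i
        - ((p : ℝ) + 1) * (tmat A xs).mulVec us i) = 0)
    (h3 : ∑ i, us i * (q i + tvec A xs i) = 0)
    (h4 : ∑ i, (xs i - us i) * (tmat A xs).mulVec (fun j => xs j - us j) i ≤ 0) :
    xs = us ∧ (∀ i, 0 ≤ xs i) ∧ (∀ i, 0 ≤ tvec A xs i + q i) ∧
      ∑ i, xs i * (tvec A xs i + q i) = 0 := by
  have hpdM := hpd xs hxne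
  have hv : (fun j => xs j - us j) = 0 := by
    by_contra hne
    have hlt := hpdM.dotProduct_mulVec_pos (x := fun j => xs j - us j) hne
    simp only [star_trivial, dotProduct] at hlt
    linarith
  have hxu : xs = us := by
    funext i
    have := congrFun hv i
    simpa [sub_eq_zero] using this
  subst hxu
  refine ⟨rfl, hxs, hfeas, ?_⟩
  calc ∑ i, xs i * (tvec A xs i + q i) = ∑ i, xs i * (q i + tvec A xs i) := by
        simp [add_comm]
    _ = 0 := h3
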